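/- Let τ > 0, β ∈ (0,1], κ₁ ≥ 0, κ₂ > 0, a ≥ 0, μ > 0 with κ₁ < 1 + τa^β, and set ρ(y) = 1 − κ₁ + τy^β for y ≥ 0 and Φ(x) = a/κ₂ + μ/(κ₂ ρ(κ₂x)) for x ≥ a/κ₂. Then Φ maps [a/κ₂, ∞) into itself and the composition x ↦ Φ(Φ(x)) is concave on [a/κ₂, ∞). -/

import Mathlib

set_option maxHeartbeats 1600000

open Set

/-- `ρ(y) = 1 - κ₁ + τ y^β`. -/
noncomputable def rho (τ β κ₁ : ℝ) (y : ℝ) : ℝ := 1 - κ₁ + τ * y ^ β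

/-- The fixed-point map `Φ(x) = a/κ₂ + μ/(κ₂ ρ(κ₂ x))` of the polynomial
inhibition model. -/
noncomputable def PhiPoly (τ β κ₁ κ₂ a μ : ℝ) (x : ℝ) : ℝ :=
  a / κ₂ + μ / (κ₂ * rho τ β κ₁ (κ₂ * x))

lemma amgm_aux {β t : ℝ} (hβ0 : 0 < β) (hβ1 : β ≤ 1) (ht : 0 < t) :
    1 ≤ (1-β) * t ^ β + β * t ^ (β-1) := by
  have h := Real.geom_mean_le_arith_mean2_weighted (by linarith : (0:ℝ) ≤ 1 - β)
    hβ0.le (Real.rpow_nonneg ht.le β) (Real.rpow_nonneg ht.le (β-1)) (by ring)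
  calc (1:ℝ) = (t ^ β) ^ (1-β) * (t ^ (β-1)) ^ β := by
        rw [← Real.rpow_mul ht.le, ← Real.rpow_mul ht.le, ← Real.rpow_add ht]
        rw [show β*(1-β) + (β-1)*β = 0 by ring, Real.rpow_zero]
    _ ≤ _ := h

lemma core_ineq {β : ℝ} (hβ0 : 0 < β) (hβ1 : β ≤ 1) {t : ℝ} (ht : 1 ≤ t) :
    (1+β) * t + (1-β) ≤ t ^ β * ((1-β) * t + (1+β)) := by
  set ψ : ℝ → ℝ := fun t => t ^ β * ((1-β) * t + (1+β)) - ((1+β) * t + (1-β)) with hψ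
  have hder : ∀ u ∈ interior (Set.Ici (1:ℝ)), HasDerivAt ψ
      ((1+β) * ((1-β) * u ^ β + β * u ^ (β-1) - 1)) u := by
    intro u hu
    rw [interior_Ici] at hu
    have hu0 : (0:ℝ) < u := lt_trans one_pos hu
    have h1 : HasDerivAt (fun t : ℝ => t ^ β) (β * u ^ (β-1)) u := by
      simpa using Real.hasDerivAt_rpow_const (x := u) (p := β) (Or.inl hu0.ne')
    have h2 : HasDerivAt (fun t : ℝ => (1-β) * t + (1+β)) (1-β) u := by
      simpa using ((hasDerivAt_id u).const_mul (1-β)).add_const (1+β)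
    have h3 : HasDerivAt (fun t : ℝ => (1+β) * t + (1-β)) (1+β) u := by
      simpa using ((hasDerivAt_id u).const_mul (1+β)).add_const (1-β)
    have h4 := (h1.mul h2).sub h3
    refine h4.congr_deriv ?_
    symm
    have h5 : u ^ (β-1) * u = u ^ β := by
      rw [Real.rpow_sub hu0, Real.rpow_one]; field_simp
    linear_combination -(β*(1-β)) * h5
  have hmono : MonotoneOn ψ (Set.Ici 1) := by
    apply monotoneOn_of_deriv_nonneg (convex_Ici 1)
    · apply ContinuousOn.sub
      · exact (ContinuousOn.rpow_const continuousOn_id fun x hx =>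
          Or.inl (ne_of_gt (lt_of_lt_of_le one_pos hx))).mul (by fun_prop)
      · fun_prop
    · exact fun u hu => (hder u hu).differentiableAt.differentiableWithinAt
    · intro u hu
      rw [(hder u hu).deriv]
      have hu0 : (0:ℝ) < u := lt_trans one_pos (by rwa [interior_Ici] at hu)
      have := amgm_aux hβ0 hβ1 hu0
      nlinarith
  have h1 : ψ 1 = 0 := by simp [hψ]
  have := hmono (self_mem_Ici) ht ht
  rw [h1] at this
  simpa [hψ, sub_nonneg] using this

lemma key_ineq {τ β c a p : ℝ} (hτ : 0 < τ) (hβ0 : 0 < β) (hβ1 : β ≤ 1)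
    (ha : 0 ≤ a) (hA : 0 < c + τ * a ^ β) (hp : a < p) :
    (p - a) * ((1-β) * c + (1+β) * (τ * p ^ β)) ≤ 2 * p * (c + τ * p ^ β) := by
  have hp0 : 0 < p := lt_of_le_of_lt ha hp
  have hP0 : 0 < p ^ β := Real.rpow_pos_of_pos hp0 β
  have hA0 : 0 ≤ a ^ β := Real.rpow_nonneg ha β
  rcases le_or_gt 0 c with hc | hc
  · nlinarith [mul_nonneg ha (add_nonneg (mul_nonneg (by linarith : (0:ℝ) ≤ 1-β) hc)
      (mul_nonneg (by linarith : (0:ℝ) ≤ 1+β) (mul_nonneg hτ.le hP0.le))),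
      mul_nonneg hp0.le (mul_nonneg hβ0.le hc),
      mul_nonneg hp0.le (mul_nonneg hβ0.le (mul_nonneg hτ.le hP0.le))]
  · have ha0 : 0 < a := by
      rcases eq_or_lt_of_le ha with h | h
      · exfalso; rw [← h, Real.zero_rpow hβ0.ne'] at hA; linarith
      · exact h
    set t := p / a with htdef
    have ht1 : 1 < t := (one_lt_div ha0).2 hp
    have hpt : p = a * t := by rw [htdef]; field_simp
    have hPb : p ^ β = a ^ β * t ^ β := by
      rw [hpt, Real.mul_rpow ha0.le (by positivity)]
    have hT0 : 0 < t ^ β := Real.rpow_pos_of_pos (by linarith) β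
    have hcore := core_ineq hβ0 hβ1 ht1.le
    rw [hPb, hpt]
    have hAb0 : 0 < a ^ β := Real.rpow_pos_of_pos ha0 β
    nlinarith [mul_nonneg (mul_nonneg (mul_nonneg hτ.le hAb0.le) ha0.le)
        (sub_nonneg.2 hcore),
      mul_nonneg (by linarith : (0:ℝ) ≤ c + τ * a ^ β)
        (by nlinarith : (0:ℝ) ≤ 2*(a*t) - (1-β)*(a*t-a))]

lemma G_concave {τ β c a μ : ℝ} (hτ : 0 < τ) (hβ0 : 0 < β) (hβ1 : β ≤ 1)
    (ha : 0 ≤ a) (hμ : 0 < μ) (hA : 0 < c + τ * a ^ β) :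
    ConcaveOn ℝ (Ici (c + τ * a ^ β)) (fun s => (c + τ * (a + μ * s⁻¹) ^ β)⁻¹) := by
  set A := c + τ * a ^ β with hAdef
  have hfacts : ∀ s, s ∈ Ici A → 0 < s ∧ a < a + μ * s⁻¹ ∧ 0 < a + μ * s⁻¹ ∧
      0 < c + τ * (a + μ * s⁻¹) ^ β := by
    intro s hs
    have hs0 : 0 < s := lt_of_lt_of_le hA hs
    have hinv : 0 < μ * s⁻¹ := mul_pos hμ (inv_pos.2 hs0)
    have hpa : a < a + μ * s⁻¹ := by linarith
    have hp0 : 0 < a + μ * s⁻¹ := lt_of_le_of_lt ha hpa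
    have hrb : a ^ β ≤ (a + μ * s⁻¹) ^ β := Real.rpow_le_rpow ha hpa.le hβ0.le
    exact ⟨hs0, hpa, hp0, by nlinarith⟩
  set F1 : ℝ → ℝ := fun s =>
    (τ*β*μ) * ((a + μ * s⁻¹) ^ (β-1) / (s^2 * (c + τ * (a + μ * s⁻¹) ^ β)^2)) with hF1
  have hder1 : ∀ s ∈ interior (Ici A), HasDerivAt
      (fun s => (c + τ * (a + μ * s⁻¹) ^ β)⁻¹) (F1 s) s := by
    intro s hs
    rw [interior_Ici] at hs
    obtain ⟨hs0, hpa, hp0, hr0⟩ := hfacts s (mem_Ici.2 (le_of_lt hs))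
    have hp' : HasDerivAt (fun s : ℝ => a + μ * s⁻¹) (μ * (-(s^2)⁻¹)) s :=
      ((hasDerivAt_inv hs0.ne').const_mul μ).const_add a
    have hq := hp'.rpow_const (p := β) (Or.inl hp0.ne')
    have hr' := (hq.const_mul τ).const_add c
    have hG := hr'.inv hr0.ne'
    refine hG.congr_deriv ?_
    symm
    simp only [hF1]
    field_simp
  set F2 : ℝ → ℝ := fun s =>
    (τ*β*μ*s*(c + τ * (a + μ * s⁻¹) ^ β)*((a + μ * s⁻¹) ^ β) / (a + μ * s⁻¹)^2) *
      ((μ*s⁻¹) * ((1-β)*c + (1+β)*(τ*(a + μ * s⁻¹) ^ β))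
        - 2*(a + μ * s⁻¹)*(c + τ * (a + μ * s⁻¹) ^ β))
      / ((s^2 * (c + τ * (a + μ * s⁻¹) ^ β)^2)^2) with hF2
  have hder2 : ∀ s ∈ interior (Ici A), HasDerivAt F1 (F2 s) s := by
    intro s hs
    rw [interior_Ici] at hs
    obtain ⟨hs0, hpa, hp0, hr0⟩ := hfacts s (mem_Ici.2 (le_of_lt hs))
    have hp' : HasDerivAt (fun s : ℝ => a + μ * s⁻¹) (μ * (-(s^2)⁻¹)) s :=
      ((hasDerivAt_inv hs0.ne').const_mul μ).const_add a
    have hq := hp'.rpow_const (p := β) (Or.inl hp0.ne')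
    have hr' := (hq.const_mul τ).const_add c
    have hN := hp'.rpow_const (p := β - 1) (Or.inl hp0.ne')
    have hD1 : HasDerivAt (fun s : ℝ => s^2) (2*s) s := by
      simpa using hasDerivAt_pow 2 s
    have hD2 := hr'.pow 2
    have hD := hD1.mul hD2
    have hDne : s^2 * (c + τ * (a + μ * s⁻¹) ^ β)^2 ≠ 0 := by positivity
    have hquot := (hN.div hD hDne).const_mul (τ*β*μ)
    refine hquot.congr_deriv ?_
    symm
    simp only [Pi.mul_apply, Pi.pow_apply]
    simp only [hF2]
    have hQ : (a + μ * s⁻¹) ^ (β-1) = (a + μ * s⁻¹) ^ β / (a + μ * s⁻¹) := by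
      rw [Real.rpow_sub hp0, Real.rpow_one]
    have hR : (a + μ * s⁻¹) ^ (β-1-1) = (a + μ * s⁻¹) ^ β / (a + μ * s⁻¹) / (a + μ * s⁻¹) := by
      rw [Real.rpow_sub hp0, Real.rpow_sub hp0, Real.rpow_one]
    rw [hQ, hR]
    have h1 := hs0.ne'
    have h2 := hp0.ne'
    have h3 := hr0.ne'
    clear hQ hR hq hr' hN hD1 hD2 hD hquot hp' hDne hs hpa hp0 hr0 hs0 hfacts hder1
    generalize hP : (a + μ * s⁻¹) ^ β = P at h3 ⊢
    generalize hp2 : a + μ * s⁻¹ = p at h2 ⊢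
    clear hP hp2
    push_cast
    simp only [pow_one]
    field_simp
    ring
  have hnonpos : ∀ s ∈ interior (Ici A), F2 s ≤ 0 := by
    intro s hs
    rw [interior_Ici] at hs
    obtain ⟨hs0, hpa, hp0, hr0⟩ := hfacts s (mem_Ici.2 (le_of_lt hs))
    simp only [hF2]
    have hkey := key_ineq hτ hβ0 hβ1 ha hA hpa
    have hE : (μ*s⁻¹) * ((1-β)*c + (1+β)*(τ*(a + μ * s⁻¹) ^ β))
        - 2*(a + μ * s⁻¹)*(c + τ * (a + μ * s⁻¹) ^ β) ≤ 0 := by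
      have h0 : a + μ * s⁻¹ - a = μ * s⁻¹ := by ring
      rw [h0] at hkey
      linarith
    have hX : 0 ≤ τ*β*μ*s*(c + τ * (a + μ * s⁻¹) ^ β)*((a + μ * s⁻¹) ^ β) / (a + μ * s⁻¹)^2 := by
      have := Real.rpow_pos_of_pos hp0 β
      positivity
    apply div_nonpos_of_nonpos_of_nonneg (mul_nonpos_of_nonneg_of_nonpos hX hE)
    positivity
  have hcont : ContinuousOn (fun s => (c + τ * (a + μ * s⁻¹) ^ β)⁻¹) (Ici A) := by
    apply ContinuousOn.inv₀
    · apply continuousOn_const.add (ContinuousOn.mul continuousOn_const ?_)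
      apply ContinuousOn.rpow_const
      · exact continuousOn_const.add (continuousOn_const.mul
          (continuousOn_id.inv₀ fun s hs => (hfacts s hs).1.ne'))
      · exact fun s hs => Or.inr hβ0.le
    · exact fun s hs => (hfacts s hs).2.2.2.ne'
  exact concaveOn_of_hasDerivWithinAt2_nonpos (convex_Ici A) hcont
    (fun s hs => (hder1 s hs).hasDerivWithinAt)
    (fun s hs => (hder2 s hs).hasDerivWithinAt) hnonpos

lemma G_mono {τ β c a μ : ℝ} (hτ : 0 < τ) (hβ0 : 0 < β)
    (ha : 0 ≤ a) (hμ : 0 < μ) (hA : 0 < c + τ * a ^ β) :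
    MonotoneOn (fun s => (c + τ * (a + μ * s⁻¹) ^ β)⁻¹) (Ici (c + τ * a ^ β)) := by
  intro s₁ hs₁ s₂ hs₂ h12
  have hs₁0 : 0 < s₁ := lt_of_lt_of_le hA hs₁
  have hs₂0 : 0 < s₂ := lt_of_lt_of_le hA hs₂
  have hp₂ : a < a + μ * s₂⁻¹ := by
    have : 0 < μ * s₂⁻¹ := mul_pos hμ (inv_pos.2 hs₂0); linarith
  have hple : a + μ * s₂⁻¹ ≤ a + μ * s₁⁻¹ := by
    have := inv_anti₀ hs₁0 h12
    nlinarith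
  have hb2 : a ^ β ≤ (a + μ * s₂⁻¹) ^ β := Real.rpow_le_rpow ha hp₂.le hβ0.le
  have hb : (a + μ * s₂⁻¹) ^ β ≤ (a + μ * s₁⁻¹) ^ β :=
    Real.rpow_le_rpow (le_trans ha hp₂.le) hple hβ0.le
  have h20 : 0 < c + τ * (a + μ * s₂⁻¹) ^ β := by nlinarith
  apply inv_anti₀ h20
  nlinarith

/-- Composition of a monotone concave function with a concave function. -/
lemma concave_comp {s t : Set ℝ} {f g : ℝ → ℝ} (hf : ConcaveOn ℝ s f)
    (hg : ConcaveOn ℝ t g) (hmono : MonotoneOn g t) (hmaps : ∀ x ∈ s, f x ∈ t) :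
    ConcaveOn ℝ s (fun x => g (f x)) := by
  refine ⟨hf.1, fun x hx y hy u v hu hv huv => ?_⟩
  have h1 := hf.2 hx hy hu hv huv
  have hfx := hmaps x hx
  have hfy := hmaps y hy
  have hmem : u • f x + v • f y ∈ t := hg.1 hfx hfy hu hv huv
  have hmem2 : f (u • x + v • y) ∈ t := hmaps _ (hf.1 hx hy hu hv huv)
  calc u • g (f x) + v • g (f y) ≤ g (u • f x + v • f y) := hg.2 hfx hfy hu hv huv
    _ ≤ g (f (u • x + v • y)) := hmono hmem hmem2 h1

theorem stmt17 (τ β κ₁ κ₂ a μ : ℝ)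
    (hτ : 0 < τ) (hβ : 0 < β ∧ β ≤ 1) (hκ₁ : 0 ≤ κ₁) (hκ₂ : 0 < κ₂)
    (ha : 0 ≤ a) (hμ : 0 < μ) (hcrit : κ₁ < 1 + τ * a ^ β) :
    (∀ x, a / κ₂ ≤ x → a / κ₂ ≤ PhiPoly τ β κ₁ κ₂ a μ x) ∧
    ConcaveOn ℝ (Set.Ici (a / κ₂))
      (fun x => PhiPoly τ β κ₁ κ₂ a μ (PhiPoly τ β κ₁ κ₂ a μ x)) := by
  obtain ⟨hβ0, hβ1⟩ := hβ
  set c := 1 - κ₁ with hc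
  have hA : 0 < c + τ * a ^ β := by rw [hc]; linarith
  -- basic facts about rho
  have hrho : ∀ x, a / κ₂ ≤ x → c + τ * a ^ β ≤ rho τ β κ₁ (κ₂ * x) := by
    intro x hx
    have hax : a ≤ κ₂ * x := by
      rw [div_le_iff₀ hκ₂] at hx; linarith [hx]
    have := Real.rpow_le_rpow ha hax hβ0.le
    unfold rho; rw [hc]; nlinarith
  have hrho_pos : ∀ x, a / κ₂ ≤ x → 0 < rho τ β κ₁ (κ₂ * x) :=
    fun x hx => lt_of_lt_of_le hA (hrho x hx)
  -- Part 1
  have part1 : ∀ x, a / κ₂ ≤ x → a / κ₂ ≤ PhiPoly τ β κ₁ κ₂ a μ x := by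
    intro x hx
    unfold PhiPoly
    have h := hrho_pos x hx
    have : 0 ≤ μ / (κ₂ * rho τ β κ₁ (κ₂ * x)) :=
      div_nonneg hμ.le (mul_nonneg hκ₂.le h.le)
    linarith
  refine ⟨part1, ?_⟩
  -- Part 2
  -- the composed map equals a/κ₂ + (μ/κ₂) * G (ρ(κ₂ x))
  set G : ℝ → ℝ := fun s => (c + τ * (a + μ * s⁻¹) ^ β)⁻¹ with hG
  have hEq : ∀ x, a / κ₂ ≤ x → PhiPoly τ β κ₁ κ₂ a μ (PhiPoly τ β κ₁ κ₂ a μ x)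
      = a / κ₂ + (μ / κ₂) * G (rho τ β κ₁ (κ₂ * x)) := by
    intro x hx
    have h1 : 0 < rho τ β κ₁ (κ₂ * x) := hrho_pos x hx
    have h2 : κ₂ * PhiPoly τ β κ₁ κ₂ a μ x = a + μ * (rho τ β κ₁ (κ₂ * x))⁻¹ := by
      unfold PhiPoly
      field_simp
    have h3 : rho τ β κ₁ (κ₂ * PhiPoly τ β κ₁ κ₂ a μ x)
        = c + τ * (a + μ * (rho τ β κ₁ (κ₂ * x))⁻¹) ^ β := by
      rw [h2]; unfold rho; rw [hc]
    conv_lhs => rw [PhiPoly, h3]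
    rw [hG]
    have h4 : 0 < a + μ * (rho τ β κ₁ (κ₂ * x))⁻¹ := by
      have : 0 < μ * (rho τ β κ₁ (κ₂ * x))⁻¹ := mul_pos hμ (inv_pos.2 h1)
      linarith
    have h5 : a ^ β ≤ (a + μ * (rho τ β κ₁ (κ₂ * x))⁻¹) ^ β := by
      apply Real.rpow_le_rpow ha _ hβ0.le
      have : 0 < μ * (rho τ β κ₁ (κ₂ * x))⁻¹ := mul_pos hμ (inv_pos.2 h1)
      linarith
    have h6 : 0 < c + τ * (a + μ * (rho τ β κ₁ (κ₂ * x))⁻¹) ^ β := by nlinarith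
    field_simp
  -- inner map is concave and maps into Ici A
  have hinner : ConcaveOn ℝ (Ici (a / κ₂)) (fun x => rho τ β κ₁ (κ₂ * x)) := by
    have hcp := Real.concaveOn_rpow hβ0.le hβ1
    refine ⟨convex_Ici _, fun x hx y hy u v hu hv huv => ?_⟩
    have hx0 : (0:ℝ) ≤ κ₂ * x := by
      have : a ≤ κ₂ * x := by rw [mem_Ici, div_le_iff₀ hκ₂] at hx; linarith
      linarith
    have hy0 : (0:ℝ) ≤ κ₂ * y := by
      have : a ≤ κ₂ * y := by rw [mem_Ici, div_le_iff₀ hκ₂] at hy; linarith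
      linarith
    have h := hcp.2 (mem_Ici.2 hx0) (mem_Ici.2 hy0) hu hv huv
    simp only [smul_eq_mul] at h ⊢
    have harg : κ₂ * (u * x + v * y) = u * (κ₂ * x) + v * (κ₂ * y) := by ring
    unfold rho
    rw [harg]
    nlinarith [h]
  have hmaps : ∀ x ∈ Ici (a / κ₂), rho τ β κ₁ (κ₂ * x) ∈ Ici (c + τ * a ^ β) :=
    fun x hx => mem_Ici.2 (hrho x hx)
  -- outer map is concave and monotone
  have houter : ConcaveOn ℝ (Ici (c + τ * a ^ β)) G :=
    G_concave hτ hβ0 hβ1 ha hμ hA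
  have houtermono : MonotoneOn G (Ici (c + τ * a ^ β)) :=
    G_mono hτ hβ0 ha hμ hA
  have hcomp : ConcaveOn ℝ (Ici (a / κ₂))
      (fun x => a / κ₂ + (μ / κ₂) * G (rho τ β κ₁ (κ₂ * x))) := by
    have h1 : ConcaveOn ℝ (Ici (a / κ₂)) (fun x => G (rho τ β κ₁ (κ₂ * x))) :=
      concave_comp hinner houter houtermono hmaps
    have h2 := h1.smul (le_of_lt (div_pos hμ hκ₂))
    have h3 := h2.add (concaveOn_const (a / κ₂) (convex_Ici _))
    refine ⟨h3.1, fun x hx y hy u v hu hv huv => ?_⟩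
    have := h3.2 hx hy hu hv huv
    simp only [Pi.add_apply, smul_eq_mul] at this ⊢
    linarith [this]
  -- transfer along hEq
  refine ⟨hcomp.1, fun x hx y hy u v hu hv huv => ?_⟩
  have hmem := hcomp.1 hx hy hu hv huv
  beta_reduce
  rw [hEq x hx, hEq y hy, hEq _ hmem]
  exact hcomp.2 hx hy hu hv huv
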